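/- The map f is an order isomorphism from (P(n), ⪯_P) onto (M(n), ⩽): f is a bijection from P(n) to the set of all subsets of {1,…,n}, and for all v, w ∈ P(n), v ⪯_P w holds if and only if f(v) ⩽ f(w). -/

import Mathlib

open Finset

/-- Cumulative sum: `x 0 + ... + x k`. -/
def cum {n : ℕ} (x : Fin n → ℤ) (k : Fin n) : ℤ := ∑ i ∈ Finset.Iic k, x i

/-- The partial order `⪯`: every partial sum of `x` is at most that of `y`. -/
def ple {n : ℕ} (x y : Fin n → ℤ) : Prop := ∀ k : Fin n, cum x k ≤ cum y k

/-- Membership in `P(n)`: all entries are `1` or `-1`. -/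
def isPM {n : ℕ} (v : Fin n → ℤ) : Prop := ∀ i, v i = 1 ∨ v i = -1

/-- Membership in `Q(n)`. -/
def inQ {n : ℕ} (v : Fin n → ℤ) : Prop := isPM v ∧ ¬ ple v 0 ∧ ¬ ple 0 v

/-- Standard inner product on `ℤ^n`. -/
def dotp {n : ℕ} (x y : Fin n → ℤ) : ℤ := ∑ i, x i * y i

/-- The ±1 vector of a subset `S`. -/
def pS {n : ℕ} (S : Finset (Fin n)) : Fin n → ℤ := fun i => if i ∈ S then 1 else -1

/-- The vector `m_k`: first `k` entries 1, next `k+1` entries −1, rest 1 (0-indexed). -/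
def mvec (n k : ℕ) : Fin n → ℤ := fun i => if i.val < k then 1 else if i.val < 2 * k + 1 then -1 else 1

/-- An instance of the partition problem: `c_1 ≥ c_2 ≥ ⋯ ≥ c_n ≥ 0`. -/
def monoc {n : ℕ} (c : Fin n → ℤ) : Prop := (∀ i j : Fin n, i ≤ j → c j ≤ c i) ∧ ∀ i, 0 ≤ c i

/-- The map `f`: the element representing the integer `i+1` belongs to `fmap v`
iff entry number `n+1-(i+1)` of `v` (0-indexed: `n-1-i`) equals 1. -/
def fmap {n : ℕ} (v : Fin n → ℤ) : Finset (Fin n) :=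
  Finset.univ.filter (fun i => v ⟨n - 1 - i.val, by have := i.isLt; omega⟩ = 1)

/-- The order of `M(n)`: comparing the decreasing enumerations entrywise. -/
def Mle {n : ℕ} (A B : Finset (Fin n)) : Prop :=
  A.card ≤ B.card ∧
    ∀ (i : ℕ) (hA : i < (A.sort (· ≥ ·)).length) (hB : i < (B.sort (· ≥ ·)).length),
      (A.sort (· ≥ ·)).get ⟨i, hA⟩ ≤ (B.sort (· ≥ ·)).get ⟨i, hB⟩


def sig {n : ℕ} (i : Fin n) : Fin n := ⟨n - 1 - i.val, by have := i.isLt; omega⟩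

lemma sig_sig {n : ℕ} (i : Fin n) : sig (sig i) = i := by
  apply Fin.ext; simp only [sig]; have := i.isLt; omega

lemma le_sig_iff {n : ℕ} (i j : Fin n) : i ≤ sig j ↔ j ≤ sig i := by
  have hi := i.isLt; have hj := j.isLt
  simp only [sig, Fin.le_def]; omega

lemma mem_fmap {n : ℕ} {v : Fin n → ℤ} {i : Fin n} : i ∈ fmap v ↔ v (sig i) = 1 := by
  simp [fmap, sig]

lemma countP_char {n : ℕ} (t : Fin n) : ∀ (l : List (Fin n)), l.Pairwise (· ≥ ·) →
    ∀ j (h : j < l.length), (t ≤ l.get ⟨j, h⟩ ↔ j < l.countP (fun x => decide (t ≤ x))) := by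
  intro l
  induction l with
  | nil => intro _ j h; simp at h
  | cons a l ih =>
    intro hs j hj
    have hsl : l.Pairwise (· ≥ ·) := hs.of_cons
    have ha : ∀ x ∈ l, x ≤ a := fun x hx => List.rel_of_pairwise_cons hs hx
    rw [List.countP_cons]
    have hzero : ¬ t ≤ a → l.countP (fun x => decide (t ≤ x)) = 0 := by
      intro hta
      rw [List.countP_eq_zero]
      intro x hx
      simp only [decide_eq_true_eq]
      exact not_le.mpr (lt_of_le_of_lt (ha x hx) (not_le.mp hta))
    match j with
    | 0 =>
      show t ≤ a ↔ _
      by_cases hta : t ≤ a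
      · simp [hta]
      · simp [hta, hzero hta]
    | (j+1) =>
      simp only [List.length_cons] at hj
      have hj' : j < l.length := by omega
      show t ≤ l.get ⟨j, hj'⟩ ↔ _
      rw [ih hsl j hj']
      by_cases hta : t ≤ a
      · simp only [hta, decide_true, if_pos]
        omega
      · simp [hta, hzero hta]

lemma card_filter_eq_countP {n : ℕ} (A : Finset (Fin n)) (t : Fin n) :
    (A.filter (fun x => t ≤ x)).card = (A.sort (· ≥ ·)).countP (fun x => decide (t ≤ x)) := by
  rw [Finset.card_def, Finset.filter_val, ← Multiset.countP_eq_card_filter,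
    ← Finset.sort_eq A (· ≥ ·), Multiset.coe_countP]

lemma mle_iff {n : ℕ} (hn : 1 ≤ n) (A B : Finset (Fin n)) :
    Mle A B ↔ ∀ t : Fin n,
      (A.filter (fun x => t ≤ x)).card ≤ (B.filter (fun x => t ≤ x)).card := by
  have hsa : (A.sort (· ≥ ·)).Pairwise (· ≥ ·) := Finset.pairwise_sort _ _
  have hsb : (B.sort (· ≥ ·)).Pairwise (· ≥ ·) := Finset.pairwise_sort _ _
  have hlena : (A.sort (· ≥ ·)).length = A.card := Finset.length_sort _
  have hlenb : (B.sort (· ≥ ·)).length = B.card := Finset.length_sort _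
  constructor
  · rintro ⟨hcard, hget⟩ t
    rw [card_filter_eq_countP, card_filter_eq_countP]
    rcases Nat.eq_zero_or_pos ((A.sort (· ≥ ·)).countP (fun x => decide (t ≤ x))) with h0 | h0
    · omega
    · have hle : (A.sort (· ≥ ·)).countP (fun x => decide (t ≤ x)) ≤ (A.sort (· ≥ ·)).length :=
        List.countP_le_length
      set c := (A.sort (· ≥ ·)).countP (fun x => decide (t ≤ x)) with hc
      have hA : c - 1 < (A.sort (· ≥ ·)).length := by omega
      have hB : c - 1 < (B.sort (· ≥ ·)).length := by omega
      have h1 : t ≤ (A.sort (· ≥ ·)).get ⟨c - 1, hA⟩ :=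
        (countP_char t _ hsa _ hA).mpr (by omega)
      have h2 : t ≤ (B.sort (· ≥ ·)).get ⟨c - 1, hB⟩ := le_trans h1 (hget _ hA hB)
      have h3 := (countP_char t _ hsb _ hB).mp h2
      omega
  · intro h
    have hcard : A.card ≤ B.card := by
      have h0 := h ⟨0, hn⟩
      have ha : A.filter (fun x => (⟨0, hn⟩ : Fin n) ≤ x) = A := by
        apply Finset.filter_true_of_mem; intro x _; exact Fin.mk_le_of_le_val (Nat.zero_le _)
      have hb : B.filter (fun x => (⟨0, hn⟩ : Fin n) ≤ x) = B := by
        apply Finset.filter_true_of_mem; intro x _; exact Fin.mk_le_of_le_val (Nat.zero_le _)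
      rwa [ha, hb] at h0
    refine ⟨hcard, ?_⟩
    intro i hA hB
    have h1 : i < (A.sort (· ≥ ·)).countP (fun x => decide ((A.sort (· ≥ ·)).get ⟨i, hA⟩ ≤ x)) :=
      (countP_char _ _ hsa i hA).mp le_rfl
    have h2 := h ((A.sort (· ≥ ·)).get ⟨i, hA⟩)
    rw [card_filter_eq_countP, card_filter_eq_countP] at h2
    exact (countP_char _ _ hsb i hB).mpr (by omega)

lemma cum_eq {n : ℕ} {v : Fin n → ℤ} (hv : isPM v) (k : Fin n) :
    cum v k = 2 * ((Finset.Iic k).filter (fun i => v i = 1)).card - (k.val + 1) := by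
  have h1 : cum v k = ∑ i ∈ Finset.Iic k, (if v i = 1 then (1 : ℤ) else -1) := by
    apply Finset.sum_congr rfl
    intro i _
    rcases hv i with h | h <;> simp [h]
  rw [h1, Finset.sum_ite, Finset.sum_const, Finset.sum_const]
  have h2 : ((Finset.Iic k).filter (fun i => ¬ v i = 1)).card
      = (k.val + 1) - ((Finset.Iic k).filter (fun i => v i = 1)).card := by
    have := Finset.card_filter_add_card_filter_not
      (s := Finset.Iic k) (p := fun i => v i = 1)
    rw [Fin.card_Iic] at this
    omega
  rw [h2]
  have h3 : ((Finset.Iic k).filter (fun i => v i = 1)).card ≤ k.val + 1 := by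
    rw [← Fin.card_Iic k]
    exact Finset.card_filter_le _ _
  simp only [nsmul_eq_mul, mul_one, mul_neg_one]
  omega

lemma count_fmap {n : ℕ} (v : Fin n → ℤ) (t : Fin n) :
    ((fmap v).filter (fun x => t ≤ x)).card
      = ((Finset.Iic (sig t)).filter (fun i => v i = 1)).card := by
  have himg : ((fmap v).filter (fun x => t ≤ x)).image sig
      = (Finset.Iic (sig t)).filter (fun i => v i = 1) := by
    ext j
    simp only [Finset.mem_image, Finset.mem_filter, Finset.mem_Iic, mem_fmap]
    constructor
    · rintro ⟨i, ⟨hvi, hti⟩, rfl⟩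
      exact ⟨(le_sig_iff (sig i) t).mpr (by rwa [sig_sig]), hvi⟩
    · rintro ⟨hj, hvj⟩
      exact ⟨sig j, ⟨by rwa [sig_sig], (le_sig_iff t j).mpr hj⟩, sig_sig j⟩
  rw [← himg]
  rw [Finset.card_image_of_injective _ (fun i j h => by
    have := congrArg sig h; rwa [sig_sig, sig_sig] at this)]

theorem stmt2 {n : ℕ} (hn : 1 ≤ n) :
    (∀ A : Finset (Fin n), ∃! v : Fin n → ℤ, isPM v ∧ fmap v = A) ∧
    (∀ v w : Fin n → ℤ, isPM v → isPM w → (ple v w ↔ Mle (fmap v) (fmap w))) := by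
  constructor
  · intro A
    refine ⟨fun j => if sig j ∈ A then 1 else -1, ⟨?_, ?_⟩, ?_⟩
    · intro j; by_cases h : sig j ∈ A <;> simp [h]
    · ext i
      rw [mem_fmap, sig_sig]
      by_cases h : i ∈ A <;> simp [h]
    · rintro w ⟨hw, rfl⟩
      funext j
      have hmem : sig j ∈ fmap w ↔ w j = 1 := by rw [mem_fmap, sig_sig]
      rcases hw j with h | h
      · rw [if_pos (hmem.mpr h), h]
      · rw [if_neg (fun hc => by simp [hmem.mp hc] at h), h]
  · intro v w hv hw
    rw [mle_iff hn]
    constructor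
    · intro hple t
      rw [count_fmap, count_fmap]
      have h1 := hple (sig t)
      rw [cum_eq hv, cum_eq hw] at h1
      omega
    · intro h k
      rw [cum_eq hv, cum_eq hw]
      have h1 := h (sig k)
      rw [count_fmap, count_fmap, sig_sig] at h1
      omega
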